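/- If the attacked system Sa/Ga is AE-robust recoverable with respect to G_robust, then there exists a resilient supervisor S^R for the attacked closed-loop system G^R with respect to Σ_{c,v} and G_robust, i.e., a supervisor that permits the full nominal behavior L(S/G) in the absence of attacks and enforces a robust-recovery strategy to G_robust after every AE-attack. -/

import Mathlib

/-!
Common formalization of supervisory control of DES under actuator-enablement
attacks, following the natural-language context.

* A plant is a DFA with partial transition function `f : X → E → Option X`
  and initial state `x0`; `runFrom` extends `f` to strings; `Lang f x0` is the
  generated language.
* A strict subautomaton of an automaton is represented by its state set
  `Q : Set X`, with induced transition function `subStep f Q`.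
* Attacked events are modelled by the alphabet `E ⊕ E`: `Sum.inl e` is the
  ordinary event `e`, `Sum.inr e` is the attacked copy `eᵃ` (meaningful for
  `e ∈ Scv`).
* The attacked plant `gaStep`, attacked supervisor `saStep` (state `none`
  playing the role of the fresh state `A`), and their synchronous composition
  `grStep` (the attacked closed-loop system `G^R = Sa ∥ Ga`) are defined below,
  together with detection states, robust-recovery, the resilient specification
  `Ha`, supervisors for `G^R`, and resilience.
-/

open Classical List

namespace RobustRec

variable {X : Type*} {E : Type*}

/-- Extension of a partial transition function to strings. -/
def runFrom (f : X → E → Option X) : X → List E → Option X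
  | x, [] => some x
  | x, e :: w => (f x e).bind fun y => runFrom f y w

/-- Language generated from state `x0`. -/
def Lang (f : X → E → Option X) (x0 : X) : Set (List E) :=
  {w | (runFrom f x0 w).isSome}

/-- Transition function of the strict (induced) subautomaton with state set `Q`:
a transition is defined iff it is defined in the big automaton and both its
endpoints lie in `Q`. -/
noncomputable def subStep (f : X → E → Option X) (Q : Set X) : X → E → Option X :=
  fun x e => (f x e).bind fun y => if x ∈ Q ∧ y ∈ Q then some y else none

/-- Vulnerable states: those where some vulnerable controllable event is feasible. -/
def vulnStates (f : X → E → Option X) (Scv : Set E) : Set X :=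
  {x | ∃ e ∈ Scv, (f x e).isSome}

/-- A supervisor for the plant `(f, x0)`, represented by its state set `XS`
(the induced strict subautomaton): it contains `x0`, is controllable w.r.t.
the uncontrollable events `Suc`, and is safe w.r.t. the unsafe states `XUS`. -/
structure IsSupervisor (f : X → E → Option X) (x0 : X) (Suc : Set E)
    (XUS : Set X) (XS : Set X) : Prop where
  init_mem : x0 ∈ XS
  controllable : ∀ x ∈ XS, ∀ e ∈ Suc, ∀ y, f x e = some y → y ∈ XS
  safe : ∀ x ∈ XS, x ∉ XUS

/-- The attacked plant `Ga`: all transitions of `G`, plus, for every transition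
on a vulnerable event `σ ∈ Scv`, a parallel transition on its attacked copy. -/
noncomputable def gaStep (f : X → E → Option X) (Scv : Set E) :
    X → E ⊕ E → Option X
  | x, Sum.inl e => f x e
  | x, Sum.inr e => if e ∈ Scv then f x e else none

/-- The attacked supervisor `Sa`: states are `some x` for states `x` of `S`
plus the fresh state `A = none` with a self-loop on every event; for every
state `x` of `S` and `σ ∈ Scv` with `f_S(x,σ)` undefined there is a transition
on `σᵃ` from `x` to `A`. -/
noncomputable def saStep (f : X → E → Option X) (XS : Set X) (Scv : Set E) :
    Option X → E ⊕ E → Option (Option X)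
  | none, _ => some none
  | some x, Sum.inl e => (subStep f XS x e).map some
  | some x, Sum.inr e =>
      if e ∈ Scv ∧ x ∈ XS ∧ subStep f XS x e = none then some none else none

/-- Synchronous composition of two automata over a common alphabet. -/
def prodStep {X1 X2 A : Type*} (f1 : X1 → A → Option X1) (f2 : X2 → A → Option X2) :
    X1 × X2 → A → Option (X1 × X2) :=
  fun p a => (f1 p.1 a).bind fun y1 => (f2 p.2 a).map fun y2 => (y1, y2)

/-- The attacked closed-loop system `G^R = Sa ∥ Ga`. Its post-attack states are
those of the form `(none, x)`, i.e. `(A, x)`. -/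
noncomputable def grStep (f : X → E → Option X) (XS : Set X) (Scv : Set E) :
    Option X × X → E ⊕ E → Option (Option X × X) :=
  prodStep (saStep f XS Scv) (gaStep f Scv)

/-- Initial state of `G^R`. -/
def grInit (x0 : X) : Option X × X := (some x0, x0)

/-- Embedding of strings over `Σ` into strings over `Σ ∪ Σᵃ_{c,v}`. -/
def embed : List E → List (E ⊕ E) := List.map Sum.inl

/-- The language `L(Sa/Ga)` of the attacked closed-loop system. -/
noncomputable def GRLang (f : X → E → Option X) (x0 : X) (XS : Set X) (Scv : Set E) :
    Set (List (E ⊕ E)) :=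
  Lang (grStep f XS Scv) (grInit x0)

/-- The detection language `L_det = {sσ ∈ L(G) | s ∈ L(S/G), σ ∈ Σ_{c,v},
sσᵃ ∈ L(Sa/Ga)}`. -/
noncomputable def detLang (f : X → E → Option X) (x0 : X) (XS : Set X) (Scv : Set E) :
    Set (List E) :=
  {w | ∃ s σ, w = s ++ [σ] ∧ σ ∈ Scv ∧ w ∈ Lang f x0 ∧
        s ∈ Lang (subStep f XS) x0 ∧ embed s ++ [Sum.inr σ] ∈ GRLang f x0 XS Scv}

/-- The detection states `X_det = {f(x0, sσ) : sσ ∈ L_det}`. -/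
noncomputable def detStates (f : X → E → Option X) (x0 : X) (XS : Set X) (Scv : Set E) :
    Set X :=
  {x | ∃ w ∈ detLang f x0 XS Scv, runFrom f x0 w = some x}

/-- `r` is a robust-recovery strategy from `x` relative to the candidate set `R`
of recoverable states, the robust region `XR` and the bad states
`Bad = X_v ∪ X_US`: (1) `r` leads into `XR`; (2) no prefix of `r` visits `Bad`;
(3) no prefix of `r` can uncontrollably reach `Bad`; (4) any one-step
uncontrollable deviation from `r` lands in `R`. -/
def IsRecoveryPath (f : X → E → Option X) (Suc : Set E) (XR Bad : Set X)
    (R : Set X) (x : X) (r : List E) : Prop :=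
  (∃ y ∈ XR, runFrom f x r = some y) ∧
  (∀ t, t <+: r → ∀ y, runFrom f x t = some y → y ∉ Bad) ∧
  (∀ t, t <+: r → ∀ u : List E, (∀ e ∈ u, e ∈ Suc) →
      ∀ y, runFrom f x (t ++ u) = some y → y ∉ Bad) ∧
  (∀ t, t <+: r → ∀ e ∈ Suc, ∀ y, runFrom f x (t ++ [e]) = some y →
      ¬ (t ++ [e]) <+: r → y ∈ R)

/-- The set `R` of AE-robust recoverable states: the largest subset of
`X \ Bad` each of whose elements admits a robust-recovery strategy (relative
to the set itself). -/
def recSet (f : X → E → Option X) (Suc : Set E) (XR Bad : Set X) : Set X :=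
  ⋃₀ {R | R ⊆ Badᶜ ∧ ∀ x ∈ R, ∃ r, IsRecoveryPath f Suc XR Bad R x r}

/-- The attacked system `Sa/Ga` is AE-robust recoverable w.r.t. the robust
region `XR` if every detection state is AE-robust recoverable. -/
noncomputable def AERobustRecoverable (f : X → E → Option X) (x0 : X)
    (Suc Scv : Set E) (XUS XS XR : Set X) : Prop :=
  detStates f x0 XS Scv ⊆ recSet f Suc XR (vulnStates f Scv ∪ XUS)

/-- Reachable states of `G^R` (the state set of the synchronous composition). -/
noncomputable def grStates (f : X → E → Option X) (x0 : X) (XS : Set X) (Scv : Set E) :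
    Set (Option X × X) :=
  {p | ∃ w, runFrom (grStep f XS Scv) (grInit x0) w = some p}

/-- A supervisor for `G^R`, represented by its state set `Q` (inducing a strict
subautomaton of `G^R`): it contains the initial state and is controllable
w.r.t. `Suc` (attacked events being controllable). -/
structure IsGRSupervisor (f : X → E → Option X) (x0 : X) (Suc Scv : Set E)
    (XS : Set X) (Q : Set (Option X × X)) : Prop where
  subset : Q ⊆ grStates f x0 XS Scv
  init_mem : grInit x0 ∈ Q
  controllable : ∀ p ∈ Q, ∀ e ∈ Suc, ∀ q, grStep f XS Scv p (Sum.inl e) = some q → q ∈ Q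

/-- State set of the resilient specification `Ha`: `G^R` minus every post-attack
state `(A, x)` with `x ∈ X_v ∪ X_US`. -/
def haCarrier (f : X → E → Option X) (Scv : Set E) (XUS : Set X) :
    Set (Option X × X) :=
  {p | ¬ (p.1 = none ∧ p.2 ∈ vulnStates f Scv ∪ XUS)}

/-- Marked states of `Ha`: post-attack states `(A, x)` with `x` in the robust
region. -/
def haMarked (XR : Set X) : Set (Option X × X) :=
  {p | p.1 = (none : Option X) ∧ p.2 ∈ XR}

/-- The closed-loop language `L(S^R/G^R) = L(S^R)` of a supervisor `Q` for `G^R`. -/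
noncomputable def SRLang (f : X → E → Option X) (x0 : X) (XS : Set X) (Scv : Set E)
    (Q : Set (Option X × X)) : Set (List (E ⊕ E)) :=
  Lang (subStep (grStep f XS Scv) Q) (grInit x0)

/-- `S^R` is safe w.r.t. the resilient specification `Ha`: `L(S^R) ⊆ L(Ha)`. -/
noncomputable def SafeWrtHa (f : X → E → Option X) (x0 : X) (XS : Set X)
    (Scv : Set E) (XUS : Set X) (Q : Set (Option X × X)) : Prop :=
  SRLang f x0 XS Scv Q ⊆
    Lang (subStep (grStep f XS Scv) (haCarrier f Scv XUS)) (grInit x0)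

/-- `S^R` is nonblocking: from every post-attack state of `S^R`, a marked state
of `Ha` is reachable within `S^R`. -/
noncomputable def NonblockingSR (f : X → E → Option X) (XS : Set X) (Scv : Set E)
    (XR : Set X) (Q : Set (Option X × X)) : Prop :=
  ∀ p ∈ Q, p.1 = (none : Option X) →
    ∃ w q, runFrom (subStep (grStep f XS Scv) Q) p w = some q ∧ q ∈ haMarked XR

/-- `S^R` is maximally permissive among safe nonblocking supervisors for `G^R`. -/
noncomputable def MaxPermissive (f : X → E → Option X) (x0 : X) (Suc Scv : Set E)
    (XS XUS XR : Set X) (Q : Set (Option X × X)) : Prop :=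
  ∀ Q', IsGRSupervisor f x0 Suc Scv XS Q' → SafeWrtHa f x0 XS Scv XUS Q' →
    NonblockingSR f XS Scv XR Q' → SRLang f x0 XS Scv Q' ⊆ SRLang f x0 XS Scv Q

/-- `S^R` (given by its state set `Q`) is resilient w.r.t. `Scv` and the robust
region `XR`: it permits the full nominal behavior `L(S/G)`, and after any
AE-attack `sσᵃ` feasible in `L(Sa/Ga)` it permits the attack, keeps all its
subsequent behavior out of `Bad = X_v ∪ X_US`, and can always be extended
within `L(S^R)` to reach a post-attack state `(A, x)` with `x ∈ XR`; i.e. it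
enforces a robust-recovery strategy from the detection state. -/
noncomputable def ResilientSup (f : X → E → Option X) (x0 : X) (Scv : Set E)
    (XS XR Bad : Set X) (Q : Set (Option X × X)) : Prop :=
  (∀ s ∈ Lang (subStep f XS) x0, embed s ∈ SRLang f x0 XS Scv Q) ∧
  ∀ s : List E, embed s ∈ SRLang f x0 XS Scv Q →
    ∀ σ ∈ Scv, embed s ++ [Sum.inr σ] ∈ GRLang f x0 XS Scv →
      embed s ++ [Sum.inr σ] ∈ SRLang f x0 XS Scv Q ∧
      ∀ t : List E, embed s ++ [Sum.inr σ] ++ embed t ∈ SRLang f x0 XS Scv Q →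
        (∀ t', t' <+: t → ∀ y, runFrom f x0 (s ++ σ :: t') = some y →
            y ∉ Bad) ∧
        ∃ u q, runFrom (subStep (grStep f XS Scv) Q) (grInit x0)
                 (embed s ++ [Sum.inr σ] ++ embed t ++ u) = some q ∧
               q.1 = (none : Option X) ∧ q.2 ∈ XR

/-- A prefix-closed language. -/
def PrefixClosed (K : Set (List E)) : Prop := ∀ s t : List E, s ++ t ∈ K → s ∈ K

/-- `K` is controllable w.r.t. the language `M` and uncontrollable events `Suc`. -/
def ControllableLang (K M : Set (List E)) (Suc : Set E) : Prop :=
  ∀ s ∈ K, ∀ e ∈ Suc, s ++ [e] ∈ M → s ++ [e] ∈ K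

/-- The supremal controllable (prefix-closed) sublanguage of `M` w.r.t. `LG`. -/
def supC (M LG : Set (List E)) (Suc : Set E) : Set (List E) :=
  ⋃₀ {K | K ⊆ M ∧ PrefixClosed K ∧ ControllableLang K LG Suc}

end RobustRec

namespace RobustRec

section Aux

variable {X E : Type*}

theorem runFrom_append' (f : X → E → Option X) (x : X) (a b : List E) :
    runFrom f x (a ++ b) = (runFrom f x a).bind fun y => runFrom f y b := by
  induction a generalizing x with
  | nil => simp [runFrom]
  | cons e a ih =>
      simp only [List.cons_append, runFrom]
      cases f x e with
      | none => simp
      | some y => simp [ih]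

theorem subStep_eq_some' {f : X → E → Option X} {Q : Set X} {x : X} {e : E} {y : X} :
    subStep f Q x e = some y ↔ f x e = some y ∧ x ∈ Q ∧ y ∈ Q := by
  unfold subStep
  cases h : f x e with
  | none => simp
  | some z =>
      simp only [Option.bind_some]
      by_cases hq : x ∈ Q ∧ z ∈ Q
      · simp only [if_pos hq, Option.some.injEq]
        constructor
        · rintro rfl; exact ⟨rfl, hq⟩
        · rintro ⟨hzy, _⟩; exact hzy
      · simp only [if_neg hq]
        constructor
        · intro h'; exact absurd h' (by simp)
        · rintro ⟨hzy, hx, hy⟩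
          exact absurd ⟨hx, (Option.some.inj hzy) ▸ hy⟩ hq

theorem runFrom_sub_mono {f : X → E → Option X} {Q : Set X} {x y : X} {w : List E}
    (h : runFrom (subStep f Q) x w = some y) : runFrom f x w = some y := by
  induction w generalizing x with
  | nil => exact h
  | cons e w ih =>
      simp only [runFrom] at h ⊢
      cases hs : subStep f Q x e with
      | none => rw [hs] at h; simp at h
      | some z =>
          rw [hs] at h
          simp only [Option.bind_some] at h
          rw [(subStep_eq_some'.mp hs).1]
          simpa using ih h

theorem runFrom_sub_end_mem {f : X → E → Option X} {Q : Set X} {x y : X} {w : List E}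
    (hx : x ∈ Q) (h : runFrom (subStep f Q) x w = some y) : y ∈ Q := by
  induction w generalizing x with
  | nil =>
      simp only [runFrom, Option.some.injEq] at h
      exact h ▸ hx
  | cons e w ih =>
      simp only [runFrom] at h
      cases hs : subStep f Q x e with
      | none => rw [hs] at h; simp at h
      | some z =>
          rw [hs] at h
          simp only [Option.bind_some] at h
          exact ih (subStep_eq_some'.mp hs).2.2 h

theorem runFrom_isSome_of_prefix {f : X → E → Option X} {x y : X} {a w : List E}
    (hp : a <+: w) (h : runFrom f x w = some y) : ∃ z, runFrom f x a = some z := by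
  obtain ⟨b, rfl⟩ := hp
  rw [runFrom_append'] at h
  cases ha : runFrom f x a with
  | none => rw [ha] at h; simp at h
  | some z => exact ⟨z, rfl⟩

theorem runFrom_sub_of_mem {f : X → E → Option X} {Q : Set X} {x y : X} {w : List E}
    (h : runFrom f x w = some y) (hx : x ∈ Q)
    (hall : ∀ t, t <+: w → ∀ z, runFrom f x t = some z → z ∈ Q) :
    runFrom (subStep f Q) x w = some y := by
  induction w generalizing x with
  | nil => exact h
  | cons e w ih =>
      simp only [runFrom] at h ⊢
      cases he : f x e with
      | none => rw [he] at h; simp at h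
      | some z =>
          rw [he] at h
          simp only [Option.bind_some] at h
          have hz : z ∈ Q := hall [e] ⟨w, rfl⟩ z (by simp [runFrom, he])
          rw [subStep_eq_some'.mpr ⟨he, hx, hz⟩]
          simp only [Option.bind_some]
          exact ih h hz (fun t ht z' hz' =>
            hall (e :: t) (List.cons_prefix_cons.mpr ⟨rfl, ht⟩) z'
              (by simp only [runFrom, he, Option.bind_some]; exact hz'))

theorem embed_append (a b : List E) : embed (a ++ b) = embed a ++ embed b :=
  List.map_append

theorem grStep_pre_inl_some {f : X → E → Option X} {XS : Set X} {Scv : Set E}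
    {x x2 : X} {e : E} {q : Option X × X} :
    grStep f XS Scv (some x, x2) (Sum.inl e) = some q ↔
      ∃ y y2, subStep f XS x e = some y ∧ f x2 e = some y2 ∧ q = (some y, y2) := by
  simp only [grStep, prodStep, saStep, gaStep]
  cases hs : subStep f XS x e with
  | none => simp
  | some z =>
      cases hf : f x2 e with
      | none => simp
      | some z2 =>
          simp only [Option.map_some, Option.bind_some, Option.some.injEq]
          constructor
          · rintro rfl; exact ⟨z, z2, rfl, rfl, rfl⟩
          · rintro ⟨y, y2, hy, hy2, rfl⟩
            rw [hy, hy2]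

theorem grStep_post_inl_some {f : X → E → Option X} {XS : Set X} {Scv : Set E}
    {x2 : X} {e : E} {q : Option X × X} :
    grStep f XS Scv ((none : Option X), x2) (Sum.inl e) = some q ↔
      ∃ y, f x2 e = some y ∧ q = (none, y) := by
  simp only [grStep, prodStep, saStep, gaStep]
  cases hf : f x2 e with
  | none => simp
  | some z =>
      simp only [Option.bind_some, Option.map_some, Option.some.injEq]
      constructor
      · rintro rfl; exact ⟨z, rfl, rfl⟩
      · rintro ⟨y, hy, rfl⟩; rw [hy]

theorem grStep_attack_some {f : X → E → Option X} {XS : Set X} {Scv : Set E}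
    {x x2 : X} {σ : E} {q : Option X × X} :
    grStep f XS Scv (some x, x2) (Sum.inr σ) = some q ↔
      σ ∈ Scv ∧ x ∈ XS ∧ subStep f XS x σ = none ∧
        ∃ y, f x2 σ = some y ∧ q = (none, y) := by
  simp only [grStep, prodStep, saStep, gaStep]
  by_cases hc : σ ∈ Scv ∧ x ∈ XS ∧ subStep f XS x σ = none
  · rw [if_pos hc, if_pos hc.1]
    simp only [Option.bind_some]
    cases hf : f x2 σ with
    | none => simp [hc]
    | some z =>
        simp only [Option.map_some, Option.some.injEq]
        constructor
        · rintro rfl; exact ⟨hc.1, hc.2.1, hc.2.2, z, rfl, rfl⟩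
        · rintro ⟨_, _, _, y, hy, rfl⟩; rw [hy]
  · rw [if_neg hc]
    simp only [Option.bind_none]
    constructor
    · intro h; exact absurd h (by simp)
    · rintro ⟨h1, h2, h3, -⟩; exact absurd ⟨h1, h2, h3⟩ hc

theorem gr_pre_run {f : X → E → Option X} {XS : Set X} {Scv : Set E} :
    ∀ (s : List E) (x : X) (q : Option X × X),
      runFrom (grStep f XS Scv) (some x, x) (embed s) = some q ↔
        ∃ y, runFrom (subStep f XS) x s = some y ∧ q = (some y, y) := by
  intro s
  induction s with
  | nil =>
      intro x q
      simp only [embed, List.map_nil, runFrom, Option.some.injEq]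
      constructor
      · rintro rfl; exact ⟨x, rfl, rfl⟩
      · rintro ⟨y, hy, rfl⟩; rw [hy]
  | cons e s ih =>
      intro x q
      simp only [embed, List.map_cons, runFrom]
      cases hs : subStep f XS x e with
      | none =>
          have hg : grStep f XS Scv (some x, x) (Sum.inl e) = none := by
            cases hg : grStep f XS Scv (some x, x) (Sum.inl e) with
            | none => rfl
            | some q' =>
                obtain ⟨y, y2, hy, -, -⟩ := grStep_pre_inl_some.mp hg
                rw [hs] at hy; exact absurd hy (by simp)
          rw [hg]
          simp
      | some y =>
          have hf : f x e = some y := (subStep_eq_some'.mp hs).1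
          have hg : grStep f XS Scv (some x, x) (Sum.inl e) = some (some y, y) :=
            grStep_pre_inl_some.mpr ⟨y, y, hs, hf, rfl⟩
          rw [hg]
          simp only [Option.bind_some]
          exact ih y q

theorem gr_post_run {f : X → E → Option X} {XS : Set X} {Scv : Set E} :
    ∀ (t : List E) (x : X) (q : Option X × X),
      runFrom (grStep f XS Scv) ((none : Option X), x) (embed t) = some q ↔
        ∃ y, runFrom f x t = some y ∧ q = (none, y) := by
  intro t
  induction t with
  | nil =>
      intro x q
      simp only [embed, List.map_nil, runFrom, Option.some.injEq]
      constructor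
      · rintro rfl; exact ⟨x, rfl, rfl⟩
      · rintro ⟨y, hy, rfl⟩; rw [hy]
  | cons e t ih =>
      intro x q
      simp only [embed, List.map_cons, runFrom]
      cases hf : f x e with
      | none =>
          have hg : grStep f XS Scv ((none : Option X), x) (Sum.inl e) = none := by
            cases hg : grStep f XS Scv ((none : Option X), x) (Sum.inl e) with
            | none => rfl
            | some q' =>
                obtain ⟨y, hy, -⟩ := grStep_post_inl_some.mp hg
                rw [hf] at hy; exact absurd hy (by simp)
          rw [hg]
          simp
      | some y =>
          have hg : grStep f XS Scv ((none : Option X), x) (Sum.inl e) = some (none, y) :=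
            grStep_post_inl_some.mpr ⟨y, hf, rfl⟩
          rw [hg]
          simp only [Option.bind_some]
          exact ih y q

theorem recPath_tail {f : X → E → Option X} {Suc : Set E} {XR Bad R : Set X}
    {x y : X} {e : E} {r : List E}
    (h : IsRecoveryPath f Suc XR Bad R x (e :: r)) (hf : f x e = some y) :
    IsRecoveryPath f Suc XR Bad R y r := by
  obtain ⟨h1, h2, h3, h4⟩ := h
  have hrun : ∀ (w : List E), runFrom f x (e :: w) = runFrom f y w := by
    intro w; simp [runFrom, hf]
  refine ⟨?_, ?_, ?_, ?_⟩
  · obtain ⟨z, hz, hzr⟩ := h1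
    exact ⟨z, hz, by rw [← hrun]; exact hzr⟩
  · intro t ht z hz
    exact h2 (e :: t) (List.cons_prefix_cons.mpr ⟨rfl, ht⟩) z (by rw [hrun]; exact hz)
  · intro t ht u hu z hz
    refine h3 (e :: t) (List.cons_prefix_cons.mpr ⟨rfl, ht⟩) u hu z ?_
    show runFrom f x ((e :: t) ++ u) = some z
    have he : (e :: t) ++ u = e :: (t ++ u) := rfl
    rw [he, hrun]; exact hz
  · intro t ht e' he' z hz hnp
    refine h4 (e :: t) (List.cons_prefix_cons.mpr ⟨rfl, ht⟩) e' he' z ?_ ?_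
    · show runFrom f x ((e :: t) ++ [e']) = some z
      have he : (e :: t) ++ [e'] = e :: (t ++ [e']) := rfl
      rw [he, hrun]; exact hz
    · intro hc
      exact hnp (List.cons_prefix_cons.mp hc).2

/-- The set of states admitting a robust-recovery strategy relative to the
recoverable set. -/
def Pset (f : X → E → Option X) (Suc : Set E) (XR Bad : Set X) : Set X :=
  {x | ∃ r, IsRecoveryPath f Suc XR Bad (recSet f Suc XR Bad) x r}

theorem recSet_subset_compl {f : X → E → Option X} {Suc : Set E} {XR Bad : Set X} :
    recSet f Suc XR Bad ⊆ Badᶜ := by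
  rintro x ⟨R, ⟨hRB, -⟩, hx⟩
  exact hRB hx

theorem recSet_subset_Pset {f : X → E → Option X} {Suc : Set E} {XR Bad : Set X} :
    recSet f Suc XR Bad ⊆ Pset f Suc XR Bad := by
  rintro x ⟨R, ⟨hRB, hR⟩, hx⟩
  obtain ⟨r, h1, h2, h3, h4⟩ := hR x hx
  exact ⟨r, h1, h2, h3, fun t ht e he z hz hnp => ⟨R, ⟨hRB, hR⟩, h4 t ht e he z hz hnp⟩⟩

theorem Pset_not_bad {f : X → E → Option X} {Suc : Set E} {XR Bad : Set X} {x : X}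
    (hx : x ∈ Pset f Suc XR Bad) : x ∉ Bad := by
  obtain ⟨r, hr⟩ := hx
  exact hr.2.1 [] (List.nil_prefix) x rfl

theorem Pset_suc_closed {f : X → E → Option X} {Suc : Set E} {XR Bad : Set X}
    {x y : X} {e : E} (hx : x ∈ Pset f Suc XR Bad) (he : e ∈ Suc)
    (hf : f x e = some y) : y ∈ Pset f Suc XR Bad := by
  obtain ⟨r, hr⟩ := hx
  by_cases hp : [e] <+: r
  · obtain ⟨r', rfl⟩ := hp
    exact ⟨r', recPath_tail hr hf⟩
  · refine recSet_subset_Pset (hr.2.2.2 [] (List.nil_prefix) e he y ?_ ?_)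
    · simp [runFrom, hf]
    · simpa using hp

/-- The state set of the resilient supervisor: the (reachable) pre-attack part
of `S`, together with the post-attack states whose plant component admits a
robust-recovery strategy. -/
def Qres (f : X → E → Option X) (x0 : X) (Suc Scv : Set E) (XUS XS XR : Set X) :
    Set (Option X × X) :=
  {p | (∃ x, (∃ s, runFrom (subStep f XS) x0 s = some x) ∧ p = (some x, x)) ∨
       (p.1 = none ∧ p.2 ∈ Pset f Suc XR (vulnStates f Scv ∪ XUS) ∧
         p ∈ grStates f x0 XS Scv)}

theorem Qres_mem {f : X → E → Option X} {x0 : X} {Suc Scv : Set E}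
    {XUS XS XR : Set X} {p : Option X × X} :
    p ∈ Qres f x0 Suc Scv XUS XS XR ↔
      (∃ x, (∃ s, runFrom (subStep f XS) x0 s = some x) ∧ p = (some x, x)) ∨
      (p.1 = none ∧ p.2 ∈ Pset f Suc XR (vulnStates f Scv ∪ XUS) ∧
        p ∈ grStates f x0 XS Scv) := Iff.rfl

end Aux

end RobustRec

/-- the "if" direction of Theorem 2. If the attacked system
`Sa/Ga` is AE-robust recoverable w.r.t. `G_robust`, then there exists a
resilient supervisor `S^R` for the attacked closed-loop system `G^R` w.r.t.
`Σ_{c,v}` and `G_robust`, i.e. a supervisor that permits the full nominal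
behavior `L(S/G)` in the absence of attacks and enforces a robust-recovery
strategy to `G_robust` after every AE-attack. -/
theorem RobustRec.exists_resilient_of_AERobustRecoverable
    {X E : Type*} [Fintype X] [Fintype E]
    (f : X → E → Option X) (x0 : X) (Sc Suc Scv : Set E) (XUS XS XR : Set X)
    (hdisj : Sc ∩ Suc = ∅) (hcover : Sc ∪ Suc = Set.univ) (hScv : Scv ⊆ Sc)
    (hS : IsSupervisor f x0 Suc XUS XS)
    (hXR : XR ∩ (vulnStates f Scv ∪ XUS) = ∅)
    (hrec : AERobustRecoverable f x0 Suc Scv XUS XS XR) :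
    ∃ Q : Set (Option X × X), IsGRSupervisor f x0 Suc Scv XS Q ∧
      ResilientSup f x0 Scv XS XR (vulnStates f Scv ∪ XUS) Q := by
  classical
  set Bad : Set X := vulnStates f Scv ∪ XUS with hBadDef
  set Q : Set (Option X × X) := Qres f x0 Suc Scv XUS XS XR with hQdef
  -- basic facts
  have hgr_closed : ∀ p ∈ grStates f x0 XS Scv, ∀ (a : E ⊕ E) (q : Option X × X),
      grStep f XS Scv p a = some q → q ∈ grStates f x0 XS Scv := by
    rintro p ⟨w, hw⟩ a q hq
    refine ⟨w ++ [a], ?_⟩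
    rw [runFrom_append', hw]
    simp [runFrom, hq]
  have hpre_gr : ∀ (s : List E) (x : X), runFrom (subStep f XS) x0 s = some x →
      runFrom (grStep f XS Scv) (grInit x0) (embed s) = some (some x, x) := by
    intro s x h
    exact (gr_pre_run s x0 _).mpr ⟨x, h, rfl⟩
  have hQinit : grInit x0 ∈ Q := Or.inl ⟨x0, ⟨[], rfl⟩, rfl⟩
  have hpre_sub : ∀ (s : List E) (x : X), runFrom (subStep f XS) x0 s = some x →
      runFrom (subStep (grStep f XS Scv) Q) (grInit x0) (embed s) = some (some x, x) := by
    intro s x h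
    refine runFrom_sub_of_mem (hpre_gr s x h) hQinit ?_
    intro t ht z hz
    obtain ⟨b, hb⟩ := ht
    obtain ⟨s1, s2, rfl, ht1, -⟩ := List.map_eq_append_iff.mp hb.symm
    subst ht1
    obtain ⟨y, hy, rfl⟩ := (gr_pre_run s1 x0 z).mp hz
    exact Or.inl ⟨y, ⟨s1, hy⟩, rfl⟩
  -- the supervisor property
  have hsup : IsGRSupervisor f x0 Suc Scv XS Q := by
    refine ⟨?_, hQinit, ?_⟩
    · rintro p (⟨x, ⟨s, hs⟩, rfl⟩ | ⟨-, -, hp⟩)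
      · exact ⟨embed s, hpre_gr s x hs⟩
      · exact hp
    · rintro p hp e he q hq
      rcases hp with ⟨x, ⟨s, hs⟩, rfl⟩ | ⟨h1, h2, h3⟩
      · obtain ⟨y, y2, hy, hy2, rfl⟩ := grStep_pre_inl_some.mp hq
        have hfy : f x e = some y := (subStep_eq_some'.mp hy).1
        have hy2' : y2 = y := by
          rw [hfy] at hy2; exact (Option.some.inj hy2).symm
        subst hy2'
        refine Or.inl ⟨y2, ⟨s ++ [e], ?_⟩, rfl⟩
        rw [runFrom_append', hs]
        simp [runFrom, hy]
      · obtain ⟨p1, p2⟩ := p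
        simp only at h1 h2
        subst h1
        obtain ⟨y, hy, rfl⟩ := grStep_post_inl_some.mp hq
        exact Or.inr ⟨rfl, Pset_suc_closed h2 he hy, hgr_closed _ h3 _ _ hq⟩
  refine ⟨Q, hsup, ?_, ?_⟩
  · -- full nominal behavior
    intro s hs
    obtain ⟨x, hx⟩ := Option.isSome_iff_exists.mp hs
    exact Option.isSome_iff_exists.mpr ⟨_, hpre_sub s x hx⟩
  · -- post-attack behavior
    intro s hs σ hσ hatk
    obtain ⟨qs, hqs⟩ := Option.isSome_iff_exists.mp hs
    obtain ⟨x, hx, rfl⟩ := (gr_pre_run s x0 qs).mp (runFrom_sub_mono hqs)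
    obtain ⟨qa, hqa⟩ := Option.isSome_iff_exists.mp hatk
    have hgrs : runFrom (grStep f XS Scv) (grInit x0) (embed s) = some (some x, x) :=
      hpre_gr s x hx
    rw [runFrom_append', hgrs] at hqa
    simp only [Option.bind_some, runFrom] at hqa
    have hstep : grStep f XS Scv (some x, x) (Sum.inr σ) = some qa := by
      cases hg : grStep f XS Scv (some x, x) (Sum.inr σ) with
      | none => rw [hg] at hqa; simp at hqa
      | some q' =>
          rw [hg] at hqa
          simp only [Option.bind_some, runFrom] at hqa
          exact hqa
    obtain ⟨hσ', hxXS, hsubn, y_d, hfyd, rfl⟩ := grStep_attack_some.mp hstep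
    have hfrun : runFrom f x0 (s ++ [σ]) = some y_d := by
      rw [runFrom_append', runFrom_sub_mono hx]
      simp [runFrom, hfyd]
    have hdet : y_d ∈ detStates f x0 XS Scv :=
      ⟨s ++ [σ], ⟨s, σ, rfl, hσ, Option.isSome_iff_exists.mpr ⟨_, hfrun⟩,
        Option.isSome_iff_exists.mpr ⟨_, hx⟩, hatk⟩, hfrun⟩
    have hydP : y_d ∈ Pset f Suc XR Bad := recSet_subset_Pset (hrec hdet)
    have hQa : ((none : Option X), y_d) ∈ Q :=
      Or.inr ⟨rfl, hydP, hgr_closed _ ⟨embed s, hgrs⟩ _ _ hstep⟩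
    have hQx : (some x, x) ∈ Q := Or.inl ⟨x, ⟨s, hx⟩, rfl⟩
    have hsub_atk : runFrom (subStep (grStep f XS Scv) Q) (grInit x0)
        (embed s ++ [Sum.inr σ]) = some (none, y_d) := by
      rw [runFrom_append', hpre_sub s x hx]
      simp only [Option.bind_some, runFrom]
      rw [subStep_eq_some'.mpr ⟨hstep, hQx, hQa⟩]
      rfl
    refine ⟨Option.isSome_iff_exists.mpr ⟨_, hsub_atk⟩, ?_⟩
    intro t htl
    obtain ⟨qt, hqt⟩ := Option.isSome_iff_exists.mp htl
    rw [runFrom_append', hsub_atk] at hqt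
    simp only [Option.bind_some] at hqt
    have hid_post : ∀ (t' : List E) (q' : Option X × X),
        runFrom (subStep (grStep f XS Scv) Q) ((none : Option X), y_d) (embed t') = some q' →
          ∃ y', runFrom f y_d t' = some y' ∧ q' = (none, y') ∧
            y' ∈ Pset f Suc XR Bad := by
      intro t' q' h
      obtain ⟨y', hy', rfl⟩ := (gr_post_run t' y_d q').mp (runFrom_sub_mono h)
      have hmem : ((none : Option X), y') ∈ Q := runFrom_sub_end_mem hQa h
      rcases hmem with ⟨x', -, hx'⟩ | ⟨-, h2, -⟩
      · exact absurd hx' (by simp)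
      · exact ⟨y', hy', rfl, h2⟩
    constructor
    · intro t' ht' y hy
      have hpt : embed t' <+: embed t := ht'.map Sum.inl
      obtain ⟨q', hq'⟩ := runFrom_isSome_of_prefix hpt hqt
      obtain ⟨y', hy', -, hy'P⟩ := hid_post t' q' hq'
      have hy'run : runFrom f x0 (s ++ σ :: t') = some y' := by
        have hsp : s ++ σ :: t' = (s ++ [σ]) ++ t' := by simp
        rw [hsp, runFrom_append', hfrun]
        simpa using hy'
      rw [hy'run] at hy
      obtain rfl := Option.some.inj hy
      exact Pset_not_bad hy'P
    · obtain ⟨y_t, hyt, rfl, hytP⟩ := hid_post t qt hqt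
      have hQyt : ((none : Option X), y_t) ∈ Q := runFrom_sub_end_mem hQa hqt
      obtain ⟨r, hr⟩ := hytP
      have hrecrun : ∀ (r' : List E) (y : X),
          IsRecoveryPath f Suc XR Bad (recSet f Suc XR Bad) y r' →
          ((none : Option X), y) ∈ Q →
          ∃ z, z ∈ XR ∧ runFrom (subStep (grStep f XS Scv) Q)
            ((none : Option X), y) (embed r') = some (none, z) := by
        intro r'
        induction r' with
        | nil =>
            intro y hy hQy
            obtain ⟨z, hz, hzr⟩ := hy.1
            simp only [runFrom, Option.some.injEq] at hzr
            subst hzr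
            exact ⟨y, hz, rfl⟩
        | cons e r' ih =>
            intro y hy hQy
            obtain ⟨z, hz, hzr⟩ := hy.1
            simp only [runFrom] at hzr
            cases hf : f y e with
            | none => rw [hf] at hzr; simp at hzr
            | some y2 =>
                have htail := recPath_tail hy hf
                have hy2P : y2 ∈ Pset f Suc XR Bad := ⟨r', htail⟩
                have hQgr : ((none : Option X), y) ∈ grStates f x0 XS Scv := by
                  rcases hQy with ⟨x', -, hx'⟩ | ⟨-, -, h3⟩
                  · exact absurd hx' (by simp)
                  · exact h3
                have hstep2 : grStep f XS Scv ((none : Option X), y) (Sum.inl e) =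
                    some (none, y2) := grStep_post_inl_some.mpr ⟨y2, hf, rfl⟩
                have hQy2 : ((none : Option X), y2) ∈ Q :=
                  Or.inr ⟨rfl, hy2P, hgr_closed _ hQgr _ _ hstep2⟩
                obtain ⟨z', hz', hrun'⟩ := ih y2 htail hQy2
                refine ⟨z', hz', ?_⟩
                simp only [embed, List.map_cons, runFrom]
                rw [subStep_eq_some'.mpr ⟨hstep2, hQy, hQy2⟩]
                simp only [Option.bind_some]
                exact hrun'
      obtain ⟨z, hz, hrun⟩ := hrecrun r y_t hr hQyt
      refine ⟨embed r, (none, z), ?_, rfl, hz⟩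
      rw [runFrom_append', runFrom_append', hsub_atk]
      simp only [Option.bind_some]
      rw [hqt]
      simp only [Option.bind_some]
      exact hrun
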